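/- For q = 2^{2s+1} with q₀ = 2^s, the numerical semigroup H = ⟨q, q+q₀, q+2q₀, q+2q₀+1⟩ generated by q, q+q₀, q+2q₀, q+2q₀+1 has genus #(ℕ \ H) = q₀(q-1). -/

import Mathlib

lemma suz_closure_char (q0 q n : ℕ) :
    n ∈ AddSubmonoid.closure ({q, q + q0, q + 2 * q0, q + 2 * q0 + 1} : Set ℕ) ↔
    ∃ a b c d : ℕ, n = a*q + b*(q+q0) + c*(q+2*q0) + d*(q+2*q0+1) := by
  constructor
  · intro h
    induction h using AddSubmonoid.closure_induction with
    | mem x hx =>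
      rcases hx with h|h|h|h
      · exact ⟨1,0,0,0, by omega⟩
      · exact ⟨0,1,0,0, by omega⟩
      · exact ⟨0,0,1,0, by omega⟩
      · exact ⟨0,0,0,1, by simp_all⟩
    | zero => exact ⟨0,0,0,0, by simp⟩
    | add x y hx hy ihx ihy =>
      obtain ⟨a,b,c,d,rfl⟩ := ihx
      obtain ⟨a',b',c',d',rfl⟩ := ihy
      exact ⟨a+a', b+b', c+c', d+d', by ring⟩
  · rintro ⟨a,b,c,d,rfl⟩
    have h1 : q ∈ ({q, q + q0, q + 2 * q0, q + 2 * q0 + 1} : Set ℕ) := by simp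
    have h2 : q + q0 ∈ ({q, q + q0, q + 2 * q0, q + 2 * q0 + 1} : Set ℕ) := by simp
    have h3 : q + 2*q0 ∈ ({q, q + q0, q + 2 * q0, q + 2 * q0 + 1} : Set ℕ) := by simp
    have h4 : q + 2*q0 + 1 ∈ ({q, q + q0, q + 2 * q0, q + 2 * q0 + 1} : Set ℕ) := by simp
    simp only [← smul_eq_mul]
    exact add_mem (add_mem (add_mem
      (AddSubmonoid.nsmul_mem _ (AddSubmonoid.subset_closure h1) a)
      (AddSubmonoid.nsmul_mem _ (AddSubmonoid.subset_closure h2) b))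
      (AddSubmonoid.nsmul_mem _ (AddSubmonoid.subset_closure h3) c))
      (AddSubmonoid.nsmul_mem _ (AddSubmonoid.subset_closure h4) d)


-- helper: base-q0 digit extraction
lemma suz_mod_div (q0 m d : ℕ) (hd : d < q0) :
    (q0*m+d) % q0 = d ∧ (q0*m+d)/q0 = m := by
  have h0 : 0 < q0 := lt_of_le_of_lt (Nat.zero_le d) hd
  constructor
  · rw [add_comm, Nat.add_mul_mod_self_left, Nat.mod_eq_of_lt hd]
  · rw [add_comm, Nat.add_mul_div_left _ _ h0, Nat.div_eq_of_lt hd, zero_add]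

-- the membership characterization
lemma suz_char (q0 q n : ℕ) (h0 : 0 < q0) (hq : q = 2*q0^2) :
    (∃ a b c d : ℕ, n = a*q + b*(q+q0) + c*(q+2*q0) + d*(q+2*q0+1)) ↔
    ∃ A : ℕ, 2*(q0*A) + 2*(n % q0) ≤ n / q0 ∧ n / q0 ≤ 2*(q0*A) + 2*A := by
  constructor
  · rintro ⟨a,b,c,d,rfl⟩
    obtain ⟨k, d0, hd0lt, rfl⟩ : ∃ k d0, d0 < q0 ∧ d = q0*k + d0 :=
      ⟨d/q0, d%q0, Nat.mod_lt _ h0, (Nat.div_add_mod d q0).symm⟩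
    have hval : a*q + b*(q+q0) + c*(q+2*q0) + (q0*k+d0)*(q+2*q0+1)
        = q0*(2*(q0*(a+b+c+q0*k+d0+k)) + (b+2*c+2*d0+k)) + d0 := by
      rw [hq]; ring
    obtain ⟨hmod, hdiv⟩ := suz_mod_div q0 (2*(q0*(a+b+c+q0*k+d0+k)) + (b+2*c+2*d0+k)) d0 hd0lt
    refine ⟨a+b+c+q0*k+d0+k, ?_, ?_⟩
    · rw [hval, hmod, hdiv]; omega
    · rw [hval, hdiv]; omega
  · rintro ⟨A, h1, h2⟩
    have hd0lt : n % q0 < q0 := Nat.mod_lt _ h0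
    obtain ⟨t, ht⟩ : ∃ t, n / q0 = 2*(q0*A) + t :=
      Nat.exists_eq_add_of_le (by omega)
    obtain ⟨b, c, hb, hu⟩ : ∃ b c, b ≤ 1 ∧ t = 2*(n % q0) + (b + 2*c) := by
      refine ⟨(t - 2*(n % q0)) % 2, (t - 2*(n % q0)) / 2, by omega, by omega⟩
    obtain ⟨a, ha⟩ : ∃ a, A = b + c + n % q0 + a :=
      Nat.exists_eq_add_of_le (by omega)
    refine ⟨a, b, c, n % q0, ?_⟩
    calc n = q0*(n/q0) + n % q0 := (Nat.div_add_mod n q0).symm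
    _ = q0*(2*(q0*(b+c+(n%q0)+a)) + (2*(n%q0)+(b+2*c))) + n%q0 := by
        rw [ht, hu, ha]
    _ = a*q + b*(q+q0) + c*(q+2*q0) + (n%q0)*(q+2*q0+1) := by rw [hq]; ring


def gapM (q0 d : ℕ) : Finset ℕ :=
  Finset.range (2*(q0*d)+2*d) ∪
  (Finset.Ico d (q0+d)).biUnion fun A => Finset.Ioo (2*(q0*A)+2*A) (2*(q0*A)+2*q0+2*d)

def gapF (q0 : ℕ) : Finset ℕ :=
  (Finset.range q0).biUnion fun d => (gapM q0 d).image fun m => q0*m + d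

lemma mem_gapM (q0 d m : ℕ) (hd : d < q0) :
    m ∈ gapM q0 d ↔ ¬ ∃ A, 2*(q0*A) + 2*d ≤ m ∧ m ≤ 2*(q0*A) + 2*A := by
  constructor
  · rintro hm ⟨A, h1, h2⟩
    simp only [gapM, Finset.mem_union, Finset.mem_range, Finset.mem_biUnion,
      Finset.mem_Ico, Finset.mem_Ioo] at hm
    have hdA : d ≤ A := by omega
    have hmul : q0*d ≤ q0*A := Nat.mul_le_mul_left q0 hdA
    rcases hm with hm | ⟨A', ⟨hA'1, hA'2⟩, hm1, hm2⟩
    · omega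
    · rcases le_or_gt A A' with h | h
      · have : q0*A ≤ q0*A' := Nat.mul_le_mul_left q0 h
        omega
      · have h' : q0*(A'+1) ≤ q0*A := Nat.mul_le_mul_left q0 h
        have e : q0*(A'+1) = q0*A' + q0 := by ring
        omega
  · intro hgap
    simp only [gapM, Finset.mem_union, Finset.mem_range, Finset.mem_biUnion,
      Finset.mem_Ico, Finset.mem_Ioo]
    by_cases hm : m < 2*(q0*d)+2*d
    · exact Or.inl hm
    push_neg at hm
    right
    obtain ⟨k, r, hr, hkr⟩ : ∃ k r, r < 2*q0+2 ∧ m = (2*q0+2)*k + r :=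
      ⟨m/(2*q0+2), m%(2*q0+2), Nat.mod_lt _ (by omega), (Nat.div_add_mod m (2*q0+2)).symm⟩
    have e3 : (2*q0+2)*k = 2*(q0*k)+2*k := by ring
    have hdk : d ≤ k := by
      by_contra h; push_neg at h
      have h2 : (2*q0+2)*(k+1) ≤ (2*q0+2)*d := Nat.mul_le_mul_left _ h
      have e1 : (2*q0+2)*(k+1) = (2*q0+2)*k + 2*q0+2 := by ring
      have e2 : (2*q0+2)*d = 2*(q0*d)+2*d := by ring
      omega
    have hr1 : 1 ≤ r := by
      by_contra h; push_neg at h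
      exact hgap ⟨k, by omega, by omega⟩
    have hnotk1 : ¬ (2*(q0*(k+1)) + 2*d ≤ m ∧ m ≤ 2*(q0*(k+1)) + 2*(k+1)) :=
      fun hh => hgap ⟨k+1, hh⟩
    have e4 : q0*(k+1) = q0*k + q0 := by ring
    exact ⟨k, ⟨hdk, by omega⟩, by omega, by omega⟩

lemma mem_gapF (q0 n : ℕ) (h0 : 0 < q0) :
    n ∈ gapF q0 ↔ n / q0 ∈ gapM q0 (n % q0) := by
  simp only [gapF, Finset.mem_biUnion, Finset.mem_range, Finset.mem_image]
  constructor
  · rintro ⟨d, hd, m, hm, rfl⟩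
    obtain ⟨hmod, hdiv⟩ := suz_mod_div q0 m d hd
    rw [hmod, hdiv]; exact hm
  · intro h
    exact ⟨n % q0, Nat.mod_lt _ h0, n / q0, h, Nat.div_add_mod n q0⟩

lemma suz_sum_odd (n : ℕ) : ∑ j ∈ Finset.range n, (2*j+1) = n^2 := by
  induction n with
  | zero => simp
  | succ n ih => rw [Finset.sum_range_succ, ih]; ring

lemma card_gapM (q0 d : ℕ) (hd : d < q0) :
    (gapM q0 d).card = 2*(q0*d) + 2*d + q0^2 := by
  have hdisj : Disjoint (Finset.range (2*(q0*d)+2*d))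
      ((Finset.Ico d (q0+d)).biUnion fun A =>
        Finset.Ioo (2*(q0*A)+2*A) (2*(q0*A)+2*q0+2*d)) := by
    rw [Finset.disjoint_left]
    intro x hx hx'
    simp only [Finset.mem_range] at hx
    simp only [Finset.mem_biUnion, Finset.mem_Ico, Finset.mem_Ioo] at hx'
    obtain ⟨A, ⟨hA1, hA2⟩, hx1, hx2⟩ := hx'
    have : q0*d ≤ q0*A := Nat.mul_le_mul_left q0 hA1
    omega
  have hpair : ∀ A ∈ Finset.Ico d (q0+d), ∀ A' ∈ Finset.Ico d (q0+d), A ≠ A' →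
      Disjoint (Finset.Ioo (2*(q0*A)+2*A) (2*(q0*A)+2*q0+2*d))
        (Finset.Ioo (2*(q0*A')+2*A') (2*(q0*A')+2*q0+2*d)) := by
    have key : ∀ A A' : ℕ, d ≤ A → A < A' →
        Disjoint (Finset.Ioo (2*(q0*A)+2*A) (2*(q0*A)+2*q0+2*d))
          (Finset.Ioo (2*(q0*A')+2*A') (2*(q0*A')+2*q0+2*d)) := by
      intro A A' hdA hAA
      rw [Finset.disjoint_left]
      intro x hx hx'
      simp only [Finset.mem_Ioo] at hx hx'
      have h1 : q0*(A+1) ≤ q0*A' := Nat.mul_le_mul_left q0 hAA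
      have h2 : q0*(A+1) = q0*A + q0 := by ring
      omega
    intro A hA A' hA' hne
    simp only [Finset.mem_Ico] at hA hA'
    rcases Nat.lt_or_ge A A' with h | h
    · exact key A A' hA.1 h
    · exact (key A' A hA'.1 (by omega)).symm
  rw [gapM, Finset.card_union_of_disjoint hdisj, Finset.card_range,
    Finset.card_biUnion hpair]
  have hsum : ∑ A ∈ Finset.Ico d (q0+d),
      (Finset.Ioo (2*(q0*A)+2*A) (2*(q0*A)+2*q0+2*d)).card
      = ∑ A ∈ Finset.Ico d (q0+d), (2*q0 + 2*d - (2*A+1)) := by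
    refine Finset.sum_congr rfl fun A hA => ?_
    rw [Nat.card_Ioo]; omega
  rw [hsum, Finset.sum_Ico_eq_sum_range]
  have hq0 : q0 + d - d = q0 := by omega
  rw [hq0]
  have hsum2 : ∑ i ∈ Finset.range q0, (2*q0 + 2*d - (2*(d+i)+1))
      = ∑ i ∈ Finset.range q0, (2*q0 - (2*i+1)) := by
    refine Finset.sum_congr rfl fun i hi => ?_; omega
  have hsum3 : ∑ i ∈ Finset.range q0, (2*q0 - (2*i+1))
      = ∑ i ∈ Finset.range q0, (2*(q0-1-i)+1) := by
    refine Finset.sum_congr rfl fun i hi => ?_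
    simp only [Finset.mem_range] at hi; omega
  rw [hsum2, hsum3, Finset.sum_range_reflect (fun j => 2*j+1) q0, suz_sum_odd]

lemma card_gapF (q0 : ℕ) (h0 : 0 < q0) :
    (gapF q0).card = q0*(2*q0^2 - 1) := by
  have hdisj : ∀ d ∈ Finset.range q0, ∀ d' ∈ Finset.range q0, d ≠ d' →
      Disjoint ((gapM q0 d).image fun m => q0*m + d)
        ((gapM q0 d').image fun m => q0*m + d') := by
    intro d hd d' hd' hne
    simp only [Finset.mem_range] at hd hd'
    rw [Finset.disjoint_left]
    intro x hx hx'
    simp only [Finset.mem_image] at hx hx'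
    obtain ⟨m, _, rfl⟩ := hx
    obtain ⟨m', _, heq⟩ := hx'
    have e1 := (suz_mod_div q0 m d hd).1
    have e2 := (suz_mod_div q0 m' d' hd').1
    rw [heq] at e2
    omega
  rw [gapF, Finset.card_biUnion hdisj]
  have hinj : ∀ d, d < q0 → ((gapM q0 d).image fun m => q0*m + d).card
      = 2*(q0*d) + 2*d + q0^2 := by
    intro d hd
    rw [Finset.card_image_of_injective _ (fun x y hxy => by
      have : q0*x = q0*y := by omega
      exact Nat.eq_of_mul_eq_mul_left h0 this), card_gapM q0 d hd]
  rw [Finset.sum_congr rfl (fun d hd => hinj d (Finset.mem_range.mp hd))]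
  have hlin : ∀ d : ℕ, 2*(q0*d) + 2*d + q0^2 = (2*q0+2)*d + q0^2 := by
    intro d; ring
  rw [Finset.sum_congr rfl (fun d _ => hlin d), Finset.sum_add_distrib,
    ← Finset.mul_sum, Finset.sum_const, Finset.card_range, smul_eq_mul]
  have hS := Finset.sum_range_id_mul_two q0
  obtain ⟨y, rfl⟩ : ∃ y, q0 = y + 1 := ⟨q0 - 1, by omega⟩
  have hS2 : (∑ i ∈ Finset.range (y+1), i) * 2 = (y+1)*y := by
    rw [hS, Nat.add_sub_cancel]
  have e1 : 2*(y+1)^2 - 1 = 2*y^2 + 4*y + 1 := by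
    have h1 : (y+1)^2 = y^2 + 2*y + 1 := by ring
    omega
  rw [e1]
  nlinarith [hS2]

/-- For `q = 2^{2s+1}` with `q₀ = 2^s`, the numerical semigroup
`H = ⟨q, q+q₀, q+2q₀, q+2q₀+1⟩` has genus `#(ℕ \ H) = q₀(q-1)`.
(This is the Weierstrass semigroup at a rational point of the Suzuki curve.) -/
theorem stmt13 (s q0 q : ℕ) (hs : 1 ≤ s) (hq0 : q0 = 2 ^ s) (hq : q = 2 * q0 ^ 2) :
    Set.ncard {n : ℕ |
        n ∉ AddSubmonoid.closure ({q, q + q0, q + 2 * q0, q + 2 * q0 + 1} : Set ℕ)}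
      = q0 * (q - 1) := by
  have h0 : 0 < q0 := by subst hq0; positivity
  have hset : {n : ℕ |
      n ∉ AddSubmonoid.closure ({q, q + q0, q + 2 * q0, q + 2 * q0 + 1} : Set ℕ)}
      = ↑(gapF q0) := by
    ext n
    simp only [Set.mem_setOf_eq, Finset.mem_coe]
    rw [suz_closure_char q0 q n, suz_char q0 q n h0 hq,
      mem_gapF q0 n h0, mem_gapM q0 (n % q0) (n / q0) (Nat.mod_lt n h0)]
  rw [hset, Set.ncard_coe_finset, card_gapF q0 h0]
  have : q - 1 = 2 * q0 ^ 2 - 1 := by omega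
  rw [this]
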